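/- Every element of the n-qubit Pauli group commuting with all elements of a Clifford-conjugated standard set is characterized: if Q_U = W†({I,X,Y,Z}^{⊗n1} ⊗ {I,Z}^{⊗n2} ⊗ {I}^{⊗n3})W for a unitary W, then its commutant inside the Pauli group is Q_U^com = W†({I}^{⊗n1} ⊗ {I,Z}^{⊗n2} ⊗ {I,X,Y,Z}^{⊗n3})W. -/
import Mathlib


open Matrix BigOperators

noncomputable section

def pauliMat : Fin 4 → Matrix (Fin 2) (Fin 2) ℂ :=
  ![1, !![0, 1; 1, 0], !![0, -Complex.I; Complex.I, 0], !![1, 0; 0, -1]]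

def PauliOp (n : ℕ) (f : Fin n → Fin 4) :
    Matrix (Fin n → Fin 2) (Fin n → Fin 2) ℂ :=
  fun v w => ∏ i, pauliMat (f i) (v i) (w i)

/-- `f` describes a Pauli in `{I,X,Y,Z}^{⊗n1} ⊗ {I,Z}^{⊗n2} ⊗ {I}^{⊗n3}`:
free on the first block, `I` or `Z` on the middle block, `I` on the last block. -/
def Adm1 (n1 n2 n3 : ℕ) (f : Fin (n1 + n2 + n3) → Fin 4) : Prop :=
  (∀ i : Fin (n1 + n2 + n3), n1 ≤ (i : ℕ) → (i : ℕ) < n1 + n2 → f i = 0 ∨ f i = 3) ∧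
  (∀ i : Fin (n1 + n2 + n3), n1 + n2 ≤ (i : ℕ) → f i = 0)

/-- `g` describes a Pauli in `{I}^{⊗n1} ⊗ {I,Z}^{⊗n2} ⊗ {I,X,Y,Z}^{⊗n3}`. -/
def Adm2 (n1 n2 n3 : ℕ) (g : Fin (n1 + n2 + n3) → Fin 4) : Prop :=
  (∀ i : Fin (n1 + n2 + n3), (i : ℕ) < n1 → g i = 0) ∧
  (∀ i : Fin (n1 + n2 + n3), n1 ≤ (i : ℕ) → (i : ℕ) < n1 + n2 → g i = 0 ∨ g i = 3)

/-! ### Auxiliary lemmas -/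

lemma pauliMat_zero : pauliMat 0 = 1 := rfl

/-- A column index at which row `0` of each Pauli matrix is nonzero. -/
def pcol : Fin 4 → Fin 2 := ![0, 1, 1, 0]

lemma pauli_entry_ne (a : Fin 4) : pauliMat a 0 (pcol a) ≠ 0 := by
  fin_cases a <;> simp [pauliMat, pcol, Complex.I_ne_zero]

lemma eq_zero_of_comm (b : Fin 4)
    (h1 : pauliMat b * pauliMat 1 = pauliMat 1 * pauliMat b)
    (h3 : pauliMat b * pauliMat 3 = pauliMat 3 * pauliMat b) : b = 0 := by
  fin_cases b
  · rfl
  · have := congrFun (congrFun h3 0) 1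
    simp [pauliMat, Matrix.mul_apply, Fin.sum_univ_two] at this
    norm_num at this
  · have := congrFun (congrFun h3 0) 1
    simp [pauliMat, Matrix.mul_apply, Fin.sum_univ_two] at this
    norm_num [Complex.ext_iff] at this
  · have := congrFun (congrFun h1 0) 1
    simp [pauliMat, Matrix.mul_apply, Fin.sum_univ_two] at this
    norm_num at this

lemma eq_zero_or_three_of_commZ (b : Fin 4)
    (h3 : pauliMat b * pauliMat 3 = pauliMat 3 * pauliMat b) : b = 0 ∨ b = 3 := by
  fin_cases b
  · left; rfl
  · have := congrFun (congrFun h3 0) 1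
    simp [pauliMat, Matrix.mul_apply, Fin.sum_univ_two] at this
    norm_num at this
  · have := congrFun (congrFun h3 0) 1
    simp [pauliMat, Matrix.mul_apply, Fin.sum_univ_two] at this
    norm_num [Complex.ext_iff] at this
  · right; rfl

lemma pauliOp_mul (n : ℕ) (f g : Fin n → Fin 4) (v w : Fin n → Fin 2) :
    (PauliOp n f * PauliOp n g) v w = ∏ i, (pauliMat (f i) * pauliMat (g i)) (v i) (w i) := by
  simp only [Matrix.mul_apply, PauliOp, ← Finset.prod_mul_distrib]
  rw [Finset.prod_univ_sum, Fintype.piFinset_univ]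

lemma pauliOp_comm_of {n : ℕ} {f g : Fin n → Fin 4}
    (h : ∀ i, pauliMat (f i) * pauliMat (g i) = pauliMat (g i) * pauliMat (f i)) :
    PauliOp n f * PauliOp n g = PauliOp n g * PauliOp n f := by
  funext v w
  rw [pauliOp_mul, pauliOp_mul]
  exact Finset.prod_congr rfl fun i _ => by rw [h i]

lemma comm_extract {n : ℕ} (g : Fin n → Fin 4) (i : Fin n) (a : Fin 4)
    (h : PauliOp n g * PauliOp n (fun j => if j = i then a else 0)
       = PauliOp n (fun j => if j = i then a else 0) * PauliOp n g) :
    pauliMat (g i) * pauliMat a = pauliMat a * pauliMat (g i) := by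
  ext x y
  set f : Fin n → Fin 4 := fun j => if j = i then a else 0 with hf
  set v : Fin n → Fin 2 := fun j => if j = i then x else 0 with hv
  set w : Fin n → Fin 2 := fun j => if j = i then y else pcol (g j) with hw
  have h2 := congrFun (congrFun h v) w
  rw [pauliOp_mul, pauliOp_mul] at h2
  rw [← Finset.mul_prod_erase Finset.univ _ (Finset.mem_univ i),
      ← Finset.mul_prod_erase Finset.univ _ (Finset.mem_univ i)] at h2
  have hrest : ∀ j ∈ Finset.univ.erase i,
      (pauliMat (g j) * pauliMat (f j)) (v j) (w j)
        = (pauliMat (f j) * pauliMat (g j)) (v j) (w j) ∧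
      (pauliMat (g j) * pauliMat (f j)) (v j) (w j) ≠ 0 := by
    intro j hj
    have hji : j ≠ i := Finset.ne_of_mem_erase hj
    constructor
    · simp only [hf, hv, hw, if_neg hji, pauliMat_zero, mul_one, one_mul]
    · simp only [hf, hv, hw, if_neg hji, pauliMat_zero, mul_one, one_mul]
      exact pauli_entry_ne (g j)
  have hprod_eq : ∏ j ∈ Finset.univ.erase i, (pauliMat (g j) * pauliMat (f j)) (v j) (w j)
      = ∏ j ∈ Finset.univ.erase i, (pauliMat (f j) * pauliMat (g j)) (v j) (w j) :=
    Finset.prod_congr rfl fun j hj => (hrest j hj).1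
  have hprod_ne : ∏ j ∈ Finset.univ.erase i, (pauliMat (g j) * pauliMat (f j)) (v j) (w j) ≠ 0 :=
    Finset.prod_ne_zero_iff.2 fun j hj => (hrest j hj).2
  rw [← hprod_eq] at h2
  have h3 := mul_right_cancel₀ hprod_ne h2
  simpa [hf, hv, hw] using h3

lemma conj_mul_conj {m : Type*} [Fintype m] [DecidableEq m] {W : Matrix m m ℂ}
    (hW' : W * Wᴴ = 1) (A B : Matrix m m ℂ) :
    (Wᴴ * A * W) * (Wᴴ * B * W) = Wᴴ * (A * B) * W := by
  simp only [Matrix.mul_assoc]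
  rw [← Matrix.mul_assoc W Wᴴ, hW', Matrix.one_mul]

lemma conj_inj {m : Type*} [Fintype m] [DecidableEq m] {W X Y : Matrix m m ℂ}
    (hW' : W * Wᴴ = 1) (h : Wᴴ * X * W = Wᴴ * Y * W) : X = Y := by
  have h2 : W * (Wᴴ * X * W) * Wᴴ = W * (Wᴴ * Y * W) * Wᴴ := by rw [h]
  simp only [← Matrix.mul_assoc] at h2
  rwa [hW', Matrix.one_mul, Matrix.mul_assoc, hW', Matrix.mul_one,
    Matrix.mul_assoc, hW', Matrix.mul_one, Matrix.one_mul] at h2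

lemma conj_comm_iff {m : Type*} [Fintype m] [DecidableEq m] {W : Matrix m m ℂ}
    (hW' : W * Wᴴ = 1) (A B : Matrix m m ℂ) :
    (Wᴴ * A * W) * (Wᴴ * B * W) = (Wᴴ * B * W) * (Wᴴ * A * W) ↔ A * B = B * A := by
  rw [conj_mul_conj hW', conj_mul_conj hW']
  exact ⟨fun h => conj_inj hW' h, fun h => by rw [h]⟩

/-- The commutant, inside the (conjugated) Pauli group, of
`Q_U = W†({I,X,Y,Z}^{⊗n1} ⊗ {I,Z}^{⊗n2} ⊗ {I}^{⊗n3})W` is exactly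
`W†({I}^{⊗n1} ⊗ {I,Z}^{⊗n2} ⊗ {I,X,Y,Z}^{⊗n3})W`. -/
theorem pauli_commutant_characterization (n1 n2 n3 : ℕ)
    (W : Matrix (Fin (n1 + n2 + n3) → Fin 2) (Fin (n1 + n2 + n3) → Fin 2) ℂ)
    (hW : Wᴴ * W = 1) (hW' : W * Wᴴ = 1) :
    {M : Matrix (Fin (n1 + n2 + n3) → Fin 2) (Fin (n1 + n2 + n3) → Fin 2) ℂ |
      ∃ g : Fin (n1 + n2 + n3) → Fin 4,
        M = Wᴴ * PauliOp (n1 + n2 + n3) g * W ∧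
        ∀ f : Fin (n1 + n2 + n3) → Fin 4, Adm1 n1 n2 n3 f →
          M * (Wᴴ * PauliOp (n1 + n2 + n3) f * W)
            = (Wᴴ * PauliOp (n1 + n2 + n3) f * W) * M}
    = {M | ∃ g : Fin (n1 + n2 + n3) → Fin 4, Adm2 n1 n2 n3 g ∧
        M = Wᴴ * PauliOp (n1 + n2 + n3) g * W} := by
  ext M
  simp only [Set.mem_setOf_eq]
  constructor
  · rintro ⟨g, rfl, hcomm⟩
    refine ⟨g, ⟨?_, ?_⟩, rfl⟩
    · -- first block : g i = 0
      intro i hi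
      have hsingle : ∀ a : Fin 4,
          pauliMat (g i) * pauliMat a = pauliMat a * pauliMat (g i) := by
        intro a
        have hA : Adm1 n1 n2 n3 (fun j => if j = i then a else 0) := by
          constructor
          · intro j hj1 hj2
            left
            have : j ≠ i := Fin.ne_of_val_ne (by omega)
            simp [this]
          · intro j hj
            have : j ≠ i := Fin.ne_of_val_ne (by omega)
            simp [this]
        have h := (conj_comm_iff hW' _ _).1 (hcomm _ hA)
        exact comm_extract g i a h
      exact eq_zero_of_comm (g i) (hsingle 1) (hsingle 3)
    · -- middle block : g i = 0 ∨ g i = 3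
      intro i hi1 hi2
      have hA : Adm1 n1 n2 n3 (fun j => if j = i then (3 : Fin 4) else 0) := by
        constructor
        · intro j hj1 hj2
          by_cases hji : j = i
          · right; simp [hji]
          · left; simp [hji]
        · intro j hj
          have : j ≠ i := Fin.ne_of_val_ne (by omega)
          simp [this]
      have h := (conj_comm_iff hW' _ _).1 (hcomm _ hA)
      exact eq_zero_or_three_of_commZ (g i) (comm_extract g i 3 h)
  · rintro ⟨g, ⟨hg1, hg2⟩, rfl⟩
    refine ⟨g, rfl, ?_⟩
    rintro f ⟨hf1, hf2⟩
    rw [conj_comm_iff hW']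
    apply pauliOp_comm_of
    intro i
    rcases lt_or_ge (i : ℕ) n1 with h | h
    · rw [hg1 i h, pauliMat_zero, one_mul, mul_one]
    · rcases lt_or_ge (i : ℕ) (n1 + n2) with h2 | h2
      · rcases hg2 i h h2 with h3 | h3 <;> rcases hf1 i h h2 with h4 | h4 <;>
          rw [h3, h4]
        all_goals first
          | rfl
          | rw [pauliMat_zero, one_mul, mul_one]
          | rw [pauliMat_zero, mul_one, one_mul]
      · rw [hf2 i h2, pauliMat_zero, one_mul, mul_one]
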